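/- Let N' be obtained from a network N by an E4 operation (adding a new species Y into some existing reactions and adding the inflow-outflow pair 0 <-> Y). Then delta(N') - delta(N) = -(cyc(N') - cyc(N)) + 1, and moreover delta(N') - delta(N) >= 0. -/

import Mathlib

open Submodule

/-- A complex on `s` species: a vector of nonnegative integers. -/
abbrev Cplx (s : ℕ) := Fin s → ℕ

/-- The real vector associated to a complex. -/
def toR {s : ℕ} (C : Cplx s) : Fin s → ℝ := fun i => (C i : ℝ)

/-- A chemical reaction network on `s` species, given by its set of reactions
(ordered pairs of distinct complexes). -/
structure Network (s : ℕ) where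
  reactions : Finset (Cplx s × Cplx s)
  ne : ∀ r ∈ reactions, r.1 ≠ r.2

namespace Network

variable {s : ℕ}

/-- The complexes of a network: all sources and targets of reactions. -/
def complexes (N : Network s) : Finset (Cplx s) :=
  N.reactions.image Prod.fst ∪ N.reactions.image Prod.snd

/-- One (undirected) step in the reaction graph. -/
def step (N : Network s) (C D : Cplx s) : Prop :=
  (C, D) ∈ N.reactions ∨ (D, C) ∈ N.reactions

/-- Being connected by a path in the undirected reaction graph. -/
def linked (N : Network s) : Cplx s → Cplx s → Prop :=
  Relation.ReflTransGen N.step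

/-- `C` and `D` are complexes of `N` lying in a common linkage class. -/
def sameLinkageClass (N : Network s) (C D : Cplx s) : Prop :=
  C ∈ N.complexes ∧ D ∈ N.complexes ∧ N.linked C D

/-- The linkage class of a complex `C`. -/
def linkageClass (N : Network s) (C : Cplx s) : Set (Cplx s) :=
  {D | N.linked C D}

/-- The number of complexes `c_N`. -/
def numComplexes (N : Network s) : ℕ := N.complexes.card

/-- The number of linkage classes `ℓ_N`. -/
noncomputable def numLinkage (N : Network s) : ℕ :=
  Set.ncard {S : Set (Cplx s) | ∃ C ∈ N.complexes, S = N.linkageClass C}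

/-- The number of reactions `r_N`. -/
def numReactions (N : Network s) : ℕ := N.reactions.card

/-- The stoichiometric subspace: the real span of all reaction vectors. -/
def stoichSubspace (N : Network s) : Submodule ℝ (Fin s → ℝ) :=
  Submodule.span ℝ {v | ∃ r ∈ N.reactions, v = toR r.2 - toR r.1}

/-- The rank of the network. -/
noncomputable def rank (N : Network s) : ℕ :=
  Module.finrank ℝ N.stoichSubspace

/-- The deficiency `δ(N) = c_N - ℓ_N - rk(N)`. -/
noncomputable def deficiency (N : Network s) : ℤ :=
  (N.numComplexes : ℤ) - N.numLinkage - N.rank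

/-- The cyclomatic number `cyc(N) = r_N - c_N + ℓ_N`. -/
noncomputable def cyc (N : Network s) : ℤ :=
  (N.numReactions : ℤ) - N.numComplexes + N.numLinkage

end Network

/-- Delete the coordinate of the new species `Y` (the last species). -/
def proj {s : ℕ} (C : Cplx (s + 1)) : Cplx s := fun i => C i.castSucc


section AuxGeneral
open Module

lemma single_image_linearIndependent {ι : Type*} (t : Set ι) :
    LinearIndependent ℝ ((↑) : ((fun i => Finsupp.single i (1:ℝ)) '' t) → (ι →₀ ℝ)) := by
  have h := (Finsupp.basisSingleOne (R := ℝ) (ι := ι)).linearIndependent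
  rw [Finsupp.coe_basisSingleOne] at h
  exact h.linearIndepOn_id.mono (by rintro v ⟨i, -, rfl⟩; exact ⟨i, rfl⟩)

lemma finrank_span_single_image {ι : Type*} (t : Finset ι) :
    finrank ℝ (span ℝ ((fun i => Finsupp.single i (1:ℝ)) '' (t : Set ι))) = t.card := by
  classical
  have hinj : Function.Injective (fun i : ι => Finsupp.single i (1:ℝ)) :=
    fun a b h => by
      simpa using Finsupp.single_left_injective (α := ι) (one_ne_zero (α := ℝ)) h
  have hset : ((fun i => Finsupp.single i (1:ℝ)) '' (t : Set ι))
      = ((t.image fun i => Finsupp.single i (1:ℝ)) : Set (ι →₀ ℝ)) := by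
    rw [Finset.coe_image]
  rw [hset, finrank_span_finset_eq_card, Finset.card_image_of_injective _ hinj]
  exact LinearIndepOn.mono (show LinearIndepOn ℝ id ((fun i => Finsupp.single i (1:ℝ)) '' (t : Set ι)) from single_image_linearIndependent _)
    (by intro x hx
        rcases Finset.mem_image.1 hx with ⟨i, hi, rfl⟩
        exact ⟨i, hi, rfl⟩)

/-- Rank--nullity for the restriction of a linear map to a submodule, stated at the level of
submodules of the ambient spaces. -/
lemma aux_rank {K V W : Type*} [Field K] [AddCommGroup V] [Module K V] [AddCommGroup W]
    [Module K W] (f : V →ₗ[K] W) (p : Submodule K V) [FiniteDimensional K p] :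
    finrank K (p.map f) + finrank K (p ⊓ LinearMap.ker f : Submodule K V) = finrank K p := by
  have h := LinearMap.finrank_range_add_finrank_ker (f.comp p.subtype)
  rw [LinearMap.range_comp, Submodule.range_subtype] at h
  rw [← h]
  congr 1
  rw [LinearMap.ker_comp, ← Submodule.map_comap_subtype]
  exact (Submodule.equivMapOfInjective p.subtype (Submodule.injective_subtype p) _).finrank_eq.symm

end AuxGeneral

namespace Network

variable {s : ℕ}

/-- The span of the edge-indicator vectors of the reaction graph. -/
noncomputable def edgeSpan (N : Network s) : Submodule ℝ (Cplx s →₀ ℝ) :=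
  Submodule.span ℝ
    {v | ∃ r ∈ N.reactions, v = Finsupp.single r.2 (1:ℝ) - Finsupp.single r.1 1}

lemma mem_complexes_fst {N : Network s} {r : Cplx s × Cplx s} (h : r ∈ N.reactions) :
    r.1 ∈ N.complexes :=
  Finset.mem_union.2 (Or.inl (Finset.mem_image.2 ⟨r, h, rfl⟩))

lemma mem_complexes_snd {N : Network s} {r : Cplx s × Cplx s} (h : r ∈ N.reactions) :
    r.2 ∈ N.complexes :=
  Finset.mem_union.2 (Or.inr (Finset.mem_image.2 ⟨r, h, rfl⟩))

lemma step_symm {N : Network s} {C D : Cplx s} (h : N.step C D) : N.step D C :=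
  h.symm

lemma linked_refl (N : Network s) (C : Cplx s) : N.linked C C :=
  Relation.ReflTransGen.refl

lemma linked_symm {N : Network s} {C D : Cplx s} (h : N.linked C D) : N.linked D C :=
  (@Relation.ReflTransGen.symmetric _ N.step ⟨fun _ _ hs => step_symm hs⟩).symm _ _ h

lemma linked_trans {N : Network s} {C D E : Cplx s} (h : N.linked C D) (h' : N.linked D E) :
    N.linked C E := h.trans h'

lemma linkageClass_eq_of_linked {N : Network s} {C D : Cplx s} (h : N.linked C D) :
    N.linkageClass C = N.linkageClass D := by
  ext E
  exact ⟨fun hE => linked_trans (linked_symm h) hE, fun hE => linked_trans h hE⟩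

lemma single_sub_single_mem {N : Network s} {C D : Cplx s} (h : N.linked C D) :
    Finsupp.single D (1:ℝ) - Finsupp.single C 1 ∈ N.edgeSpan := by
  induction h with
  | refl => simp
  | @tail b c hbd hstep ih =>
    have hbc : Finsupp.single c (1:ℝ) - Finsupp.single b 1 ∈ N.edgeSpan := by
      rcases hstep with h' | h'
      · exact Submodule.subset_span ⟨(b, c), h', rfl⟩
      · have : Finsupp.single b (1:ℝ) - Finsupp.single c 1 ∈ N.edgeSpan :=
          Submodule.subset_span ⟨(c, b), h', rfl⟩
        simpa using N.edgeSpan.neg_mem this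
    have := N.edgeSpan.add_mem hbc ih
    simpa using this

lemma key (N : Network s) :
    N.numComplexes = N.numLinkage + Module.finrank ℝ N.edgeSpan := by
  classical
  -- choose a representative in each linkage class
  set rep : Set (Cplx s) → Cplx s := fun S => if h : S.Nonempty then h.choose else (fun _ => 0)
    with hrepdef
  have hrepmem : ∀ S : Set (Cplx s), S.Nonempty → rep S ∈ S := by
    intro S h; rw [hrepdef]; simp only [dif_pos h]; exact h.choose_spec
  set f : Cplx s → Cplx s := fun C => rep (N.linkageClass C) with hfdef
  have hlinked : ∀ C, N.linked C (f C) := fun C => hrepmem _ ⟨C, linked_refl N C⟩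
  have hf_eq : ∀ {C D : Cplx s}, N.linked C D → f C = f D := by
    intro C D h
    rw [hfdef]
    simp only
    rw [linkageClass_eq_of_linked h]
  have hf_inj : ∀ {C D : Cplx s}, f C = f D → N.linked C D := by
    intro C D h
    have h1 : N.linked C (f C) := hlinked C
    have h2 : N.linked D (f D) := hlinked D
    rw [h] at h1
    exact linked_trans h1 (linked_symm h2)
  set T : (Cplx s →₀ ℝ) →ₗ[ℝ] (Cplx s →₀ ℝ) := Finsupp.lmapDomain ℝ ℝ f with hT
  set genF : Set (Cplx s →₀ ℝ) :=
    (fun C => Finsupp.single C (1:ℝ)) '' (N.complexes : Set (Cplx s)) with hgenF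
  set F : Submodule ℝ (Cplx s →₀ ℝ) := Submodule.span ℝ genF with hF
  have hFfin : FiniteDimensional ℝ F :=
    FiniteDimensional.span_of_finite ℝ (N.complexes.finite_toSet.image _)
  have hrn : Module.finrank ℝ (F.map T)
      + Module.finrank ℝ (F ⊓ LinearMap.ker T : Submodule ℝ (Cplx s →₀ ℝ))
      = Module.finrank ℝ F := aux_rank T F
  have hFc : Module.finrank ℝ F = N.numComplexes := finrank_span_single_image N.complexes
  have hTsing : ∀ C : Cplx s, T (Finsupp.single C (1:ℝ)) = Finsupp.single (f C) 1 :=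
    fun C => Finsupp.mapDomain_single
  have hrange : F.map T
      = Submodule.span ℝ ((fun C => Finsupp.single C (1:ℝ)) '' (f '' ↑N.complexes)) := by
    rw [hF, Submodule.map_span]
    congr 1
    rw [hgenF, Set.image_image, Set.image_image]
    exact Set.image_congr fun C _ => hTsing C
  have hrangecard : Module.finrank ℝ (F.map T) = N.numLinkage := by
    have h1 : (f '' (N.complexes : Set (Cplx s))) = ↑(N.complexes.image f) :=
      (Finset.coe_image).symm
    rw [hrange, h1, finrank_span_single_image]
    have h2 : {S : Set (Cplx s) | ∃ C ∈ N.complexes, S = N.linkageClass C}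
        = N.linkageClass '' ↑N.complexes := by
      ext S
      simp only [Set.mem_setOf_eq, Set.mem_image, Finset.mem_coe]
      constructor
      · rintro ⟨C, hC, h⟩; exact ⟨C, hC, h.symm⟩
      · rintro ⟨C, hC, h⟩; exact ⟨C, hC, h.symm⟩
    have h3 : f '' (N.complexes : Set (Cplx s))
        = rep '' (N.linkageClass '' ↑N.complexes) := by
      rw [Set.image_image]
    have h4 : Set.InjOn rep (N.linkageClass '' ↑N.complexes) := by
      rintro S1 ⟨C, _, rfl⟩ S2 ⟨D, _, rfl⟩ h
      exact linkageClass_eq_of_linked (hf_inj h)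
    have h5 : (↑(N.complexes.image f) : Set (Cplx s)).ncard = N.numLinkage := by
      rw [← h1, h3, Set.ncard_image_of_injOn h4, Network.numLinkage, h2]
    rw [← h5, Set.ncard_coe_finset]
  have hsub : F ≤ Submodule.comap (LinearMap.id - T) N.edgeSpan := by
    rw [hF]
    refine Submodule.span_le.2 ?_
    rintro v ⟨C, hC, rfl⟩
    simp only [SetLike.mem_coe, Submodule.mem_comap, LinearMap.sub_apply, LinearMap.id_apply]
    rw [hTsing C]
    have := single_sub_single_mem (hlinked C)
    simpa using N.edgeSpan.neg_mem this
  have hker : (F ⊓ LinearMap.ker T : Submodule ℝ (Cplx s →₀ ℝ)) = N.edgeSpan := by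
    apply le_antisymm
    · rintro x ⟨hxF, hxK⟩
      have h1 : x - T x ∈ N.edgeSpan := hsub hxF
      have h2 : T x = 0 := hxK
      rwa [h2, sub_zero] at h1
    · refine Submodule.span_le.2 ?_
      rintro v ⟨r, hr, rfl⟩
      constructor
      · exact Submodule.sub_mem _
          (Submodule.subset_span ⟨r.2, mem_complexes_snd hr, rfl⟩)
          (Submodule.subset_span ⟨r.1, mem_complexes_fst hr, rfl⟩)
      · have hcls12 : f r.1 = f r.2 :=
          hf_eq (Relation.ReflTransGen.single (Or.inl hr))
        simp only [SetLike.mem_coe, LinearMap.mem_ker, map_sub, hTsing, hcls12, sub_self]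
  rw [← hFc, ← hrn, hrangecard, hker]

end Network

theorem stmt10 {s : ℕ} (N : Network s) (N' : Network (s + 1))
    (Y : Cplx (s + 1)) (hY : Y = Pi.single (Fin.last s) 1)
    (hin : ((0 : Cplx (s + 1)), Y) ∈ N'.reactions)
    (hout : (Y, (0 : Cplx (s + 1))) ∈ N'.reactions)
    (hproj : N.reactions
        = (N'.reactions \ {((0 : Cplx (s + 1)), Y), (Y, 0)}).image
            fun r => (proj r.1, proj r.2))
    (hcard : (N'.reactions \ {((0 : Cplx (s + 1)), Y), (Y, 0)}).card = N.reactions.card) :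
    N'.deficiency - N.deficiency = -(N'.cyc - N.cyc) + 1
    ∧ 0 ≤ N'.deficiency - N.deficiency := by
  classical
  -- basic facts about Y and proj
  have hYne0 : Y ≠ (0 : Cplx (s + 1)) := by
    intro h
    have := congrFun h (Fin.last s)
    rw [hY] at this
    simp at this
  have hprojY : proj Y = (0 : Cplx s) := by
    funext i
    rw [hY]
    show Pi.single (Fin.last s) 1 i.castSucc = 0
    exact Pi.single_eq_of_ne (Fin.castSucc_lt_last i).ne 1
  have hproj0 : proj (0 : Cplx (s + 1)) = (0 : Cplx s) := rfl
  -- the number of reactions goes up by 2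
  have hpairsub : ({((0 : Cplx (s + 1)), Y), (Y, 0)} : Finset (Cplx (s+1) × Cplx (s+1)))
      ⊆ N'.reactions := by
    intro r hr
    rcases Finset.mem_insert.1 hr with h | h
    · rw [h]; exact hin
    · rw [Finset.mem_singleton.1 h]; exact hout
  have hpaircard : ({((0 : Cplx (s + 1)), Y), (Y, 0)} : Finset (Cplx (s+1) × Cplx (s+1))).card
      = 2 := by
    rw [Finset.card_insert_of_notMem, Finset.card_singleton]
    intro h
    rw [Finset.mem_singleton] at h
    exact hYne0 (congrArg Prod.fst h).symm
  have hr' : N'.numReactions = N.numReactions + 2 := by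
    have := Finset.card_sdiff_add_card_eq_card hpairsub
    rw [hcard, hpaircard] at this
    exact (this.symm.trans rfl)
  -- the rank goes up by 1
  set P : (Fin (s + 1) → ℝ) →ₗ[ℝ] (Fin s → ℝ) := LinearMap.funLeft ℝ ℝ Fin.castSucc with hP
  have hPtoR : ∀ C : Cplx (s + 1), P (toR C) = toR (proj C) := fun C => rfl
  have htoR0 : toR (0 : Cplx (s + 1)) = 0 := by funext i; simp [toR]
  have htoR0' : toR (0 : Cplx s) = 0 := by funext i; simp [toR]
  have helast : toR Y = Pi.single (Fin.last s) (1 : ℝ) := by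
    funext i
    rw [hY]
    show ((Pi.single (Fin.last s) 1 : Cplx (s+1)) i : ℝ) = _
    rw [Pi.single_apply, Pi.single_apply]
    split <;> simp
  have hmapP : (N'.stoichSubspace).map P = N.stoichSubspace := by
    apply le_antisymm
    · rw [Network.stoichSubspace, Submodule.map_span, Submodule.span_le]
      rintro w ⟨v, ⟨r, hr, rfl⟩, rfl⟩
      by_cases hmem : r ∈ ({((0 : Cplx (s + 1)), Y), (Y, 0)} : Finset (Cplx (s+1) × Cplx (s+1)))
      · have : P (toR r.2 - toR r.1) = 0 := by
          rcases Finset.mem_insert.1 hmem with h | h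
          · rw [h]; simp only [map_sub, hPtoR, hprojY, hproj0, htoR0', sub_self]
          · rw [Finset.mem_singleton.1 h]
            simp only [map_sub, hPtoR, hprojY, hproj0, htoR0', sub_self]
        rw [this]
        exact Submodule.zero_mem _
      · have hrs : r ∈ N'.reactions \ ({((0 : Cplx (s + 1)), Y), (Y, 0)} : Finset _) :=
          Finset.mem_sdiff.2 ⟨hr, hmem⟩
        have hq : (proj r.1, proj r.2) ∈ N.reactions := by
          rw [hproj]; exact Finset.mem_image.2 ⟨r, hrs, rfl⟩
        rw [map_sub, hPtoR, hPtoR]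
        exact Submodule.subset_span ⟨(proj r.1, proj r.2), hq, rfl⟩
    · refine Submodule.span_le.2 ?_
      rintro v ⟨q, hq, rfl⟩
      rw [hproj] at hq
      rcases Finset.mem_image.1 hq with ⟨r, hrs, rfl⟩
      have hr' : r ∈ N'.reactions := (Finset.mem_sdiff.1 hrs).1
      refine ⟨toR r.2 - toR r.1, Submodule.subset_span ⟨r, hr', rfl⟩, ?_⟩
      rw [map_sub, hPtoR, hPtoR]
  have hsingmem : Pi.single (Fin.last s) (1 : ℝ) ∈ N'.stoichSubspace := by
    have : toR Y - toR (0 : Cplx (s+1)) ∈ N'.stoichSubspace :=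
      Submodule.subset_span ⟨((0 : Cplx (s+1)), Y), hin, rfl⟩
    rwa [htoR0, sub_zero, helast] at this
  have hkerP : N'.stoichSubspace ⊓ LinearMap.ker P
      = Submodule.span ℝ {Pi.single (Fin.last s) (1 : ℝ)} := by
    apply le_antisymm
    · rintro x ⟨-, hxK⟩
      have hx : ∀ i : Fin s, x i.castSucc = 0 := fun i => congrFun hxK i
      refine Submodule.mem_span_singleton.2 ⟨x (Fin.last s), ?_⟩
      funext i
      induction i using Fin.lastCases with
      | last => rw [Pi.smul_apply, Pi.single_eq_same, smul_eq_mul, mul_one]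
      | cast j =>
        rw [Pi.smul_apply, Pi.single_eq_of_ne (Fin.castSucc_lt_last j).ne, smul_zero, hx j]
    · rw [Submodule.span_le, Set.singleton_subset_iff]
      refine ⟨hsingmem, ?_⟩
      refine LinearMap.mem_ker.2 ?_
      funext i
      simp [hP, LinearMap.funLeft_apply, Pi.single_eq_of_ne (Fin.castSucc_lt_last i).ne]
  have hsne : (Pi.single (Fin.last s) (1:ℝ) : Fin (s+1) → ℝ) ≠ 0 := by
    intro h0
    have := congrFun h0 (Fin.last s)
    simp at this
  have hrk : N'.rank = N.rank + 1 := by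
    have h := aux_rank P N'.stoichSubspace
    rw [hmapP, hkerP, finrank_span_singleton hsne] at h
    exact h.symm
  -- the edge span dimension goes up by at least 1
  have hEfin : ∀ {t : ℕ} (M : Network t), FiniteDimensional ℝ M.edgeSpan := by
    intro t M
    have heq : {v | ∃ r ∈ M.reactions, v = Finsupp.single r.2 (1:ℝ) - Finsupp.single r.1 1}
        = (fun r : Cplx t × Cplx t => Finsupp.single r.2 (1:ℝ) - Finsupp.single r.1 1)
          '' ↑M.reactions := by
      ext v
      simp only [Set.mem_setOf_eq, Set.mem_image, Finset.mem_coe]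
      constructor
      · rintro ⟨r, hr, rfl⟩; exact ⟨r, hr, rfl⟩
      · rintro ⟨r, hr, rfl⟩; exact ⟨r, hr, rfl⟩
    rw [Network.edgeSpan, heq]
    exact FiniteDimensional.span_of_finite ℝ (M.reactions.finite_toSet.image _)
  haveI := hEfin N
  haveI := hEfin N'
  set Q : (Cplx (s + 1) →₀ ℝ) →ₗ[ℝ] (Cplx s →₀ ℝ) :=
    Finsupp.lmapDomain ℝ ℝ proj with hQ
  have hQsing : ∀ C : Cplx (s + 1), Q (Finsupp.single C (1:ℝ)) = Finsupp.single (proj C) 1 :=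
    fun C => Finsupp.mapDomain_single
  have hmapQ : N.edgeSpan ≤ (N'.edgeSpan).map Q := by
    refine Submodule.span_le.2 ?_
    rintro v ⟨q, hq, rfl⟩
    rw [hproj] at hq
    rcases Finset.mem_image.1 hq with ⟨r, hrs, rfl⟩
    have hr' : r ∈ N'.reactions := (Finset.mem_sdiff.1 hrs).1
    refine ⟨Finsupp.single r.2 1 - Finsupp.single r.1 1,
      Submodule.subset_span ⟨r, hr', rfl⟩, ?_⟩
    rw [map_sub, hQsing, hQsing]
  have hwmem : Finsupp.single Y (1:ℝ) - Finsupp.single (0 : Cplx (s+1)) 1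
      ∈ N'.edgeSpan ⊓ LinearMap.ker Q := by
    constructor
    · exact Submodule.subset_span ⟨((0 : Cplx (s+1)), Y), hin, rfl⟩
    · show Q _ = 0
      rw [map_sub, hQsing, hQsing, hprojY, hproj0, sub_self]
  have hwne : Finsupp.single Y (1:ℝ) - Finsupp.single (0 : Cplx (s+1)) 1 ≠ 0 := by
    intro h
    have := congrFun (congrArg (fun g : Cplx (s+1) →₀ ℝ => (g : Cplx (s+1) → ℝ)) h) Y
    simp only [Finsupp.coe_sub, Pi.sub_apply, Finsupp.single_eq_same] at this
    rw [Finsupp.single_eq_of_ne' (fun h0 => hYne0 h0.symm)] at this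
    simp at this
  have hd : Module.finrank ℝ N.edgeSpan + 1 ≤ Module.finrank ℝ N'.edgeSpan := by
    have h := aux_rank Q N'.edgeSpan
    haveI : FiniteDimensional ℝ ((N'.edgeSpan).map Q) := inferInstance
    have h1 : Module.finrank ℝ N.edgeSpan ≤ Module.finrank ℝ ((N'.edgeSpan).map Q) :=
      Submodule.finrank_mono hmapQ
    haveI hfininf : FiniteDimensional ℝ
        (N'.edgeSpan ⊓ LinearMap.ker Q : Submodule ℝ (Cplx (s+1) →₀ ℝ)) :=
      Submodule.finiteDimensional_of_le inf_le_left
    have h2 : 0 < Module.finrank ℝ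
        (N'.edgeSpan ⊓ LinearMap.ker Q : Submodule ℝ (Cplx (s+1) →₀ ℝ)) := by
      refine (Module.finrank_pos_iff (R := ℝ)
        (M := ↥(N'.edgeSpan ⊓ LinearMap.ker Q : Submodule ℝ (Cplx (s+1) →₀ ℝ)))).2 ?_
      exact nontrivial_of_ne ⟨_, hwmem⟩ 0 (fun h0 => hwne (Subtype.mk_eq_mk.1 h0))
    omega
  -- put everything together
  have k1 := Network.key N
  have k2 := Network.key N'
  constructor
  · simp only [Network.deficiency, Network.cyc]
    omega
  · simp only [Network.deficiency]
    omega
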